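/- There exists a constant C > 0 depending only on m such that for every 1 ≤ p < ∞, every f ∈ L^p(G_m), every k ∈ ℕ and every j with M_k ≤ j < M_{k+1}, one has j · ∫_{G_m} ‖f(·+t) − f‖_{L^p(G_m)} · |K_j(t)| dμ(t) ≤ C Σ_{l=0}^{k} Σ_{s=0}^{l} M_s ω_p(1/M_s, f). -/

import Mathlib

open MeasureTheory Filter Finset Asymptotics ENNReal NNReal

noncomputable section

namespace VilenkinPaper

/-- The Vilenkin group `G_m = ∏_k ℤ_{m_k}`. -/
abbrev G (m : ℕ → ℕ) : Type := ∀ k, ZMod (m k)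

/-- The generalized powers `M_0 = 1`, `M_{k+1} = m_k M_k`. -/
def M (m : ℕ → ℕ) : ℕ → ℕ
  | 0 => 1
  | k + 1 => m k * M m k

/-- The basic neighborhoods `I_n = {y : y_0 = ⋯ = y_{n-1} = 0}`. -/
def I (m : ℕ → ℕ) (n : ℕ) : Set (G m) := {y | ∀ k < n, y k = 0}

/-- The generalized Rademacher functions `r_k(x) = exp(2πi x_k / m_k)`. -/
def rad (m : ℕ → ℕ) (k : ℕ) (x : G m) : ℂ :=
  Complex.exp (2 * Real.pi * Complex.I * ((x k).val : ℂ) / (m k : ℂ))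

/-- The `j`-th digit of `n` in the base determined by `m`. -/
def digit (m : ℕ → ℕ) (n j : ℕ) : ℕ := (n / M m j) % m j

/-- The Vilenkin functions `ψ_n = ∏_k r_k^{n_k}`. -/
def psi (m : ℕ → ℕ) (n : ℕ) (x : G m) : ℂ :=
  ∏ᶠ k, rad m k x ^ digit m n k

/-- Vilenkin-Fourier coefficient `f̂(k) = ∫ f ψ̄_k dμ`. -/
def fourierCoeff (m : ℕ → ℕ) (μ : Measure (G m)) (f : G m → ℂ) (k : ℕ) : ℂ :=
  ∫ x, f x * (starRingEnd ℂ) (psi m k x) ∂μ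

/-- Partial sums `S_n f = ∑_{k=0}^{n-1} f̂(k) ψ_k`. -/
def S (m : ℕ → ℕ) (μ : Measure (G m)) (n : ℕ) (f : G m → ℂ) (x : G m) : ℂ :=
  ∑ k ∈ Finset.range n, fourierCoeff m μ f k * psi m k x

/-- Fejér means `σ_n f = (1/n) ∑_{k=1}^n S_k f`. -/
def sigma (m : ℕ → ℕ) (μ : Measure (G m)) (n : ℕ) (f : G m → ℂ) (x : G m) : ℂ :=
  (n : ℂ)⁻¹ * ∑ k ∈ Finset.Icc 1 n, S m μ k f x

/-- Dirichlet kernels `D_n = ∑_{k=0}^{n-1} ψ_k`. -/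
def D (m : ℕ → ℕ) (n : ℕ) (x : G m) : ℂ := ∑ k ∈ Finset.range n, psi m k x

/-- Fejér kernels `K_n = (1/n) ∑_{k=1}^n D_k`. -/
def K (m : ℕ → ℕ) (n : ℕ) (x : G m) : ℂ := (n : ℂ)⁻¹ * ∑ k ∈ Finset.Icc 1 n, D m k x

/-- Convolution `(g ∗ f)(x) = ∫ f(t) g(x - t) dμ(t)`. -/
def conv (m : ℕ → ℕ) (μ : Measure (G m)) (g f : G m → ℂ) (x : G m) : ℂ :=
  ∫ t, f t * g (x - t) ∂μ

/-- `Q_n = ∑_{k=0}^{n-1} q_k`. -/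
def Q (q : ℕ → ℝ) (n : ℕ) : ℝ := ∑ k ∈ Finset.range n, q k

/-- Nörlund means `t_n f = (1/Q_n) ∑_{k=1}^n q_{n-k} S_k f`. -/
def T (m : ℕ → ℕ) (μ : Measure (G m)) (q : ℕ → ℝ) (n : ℕ) (f : G m → ℂ) (x : G m) : ℂ :=
  ((Q q n : ℝ) : ℂ)⁻¹ * ∑ k ∈ Finset.Icc 1 n, ((q (n - k) : ℝ) : ℂ) * S m μ k f x

/-- The modulus of continuity `ω_p(1/M_n, f) = sup_{t ∈ I_n} ‖f(·+t) - f‖_p`. -/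
def omega (m : ℕ → ℕ) (μ : Measure (G m)) (p : ℝ≥0∞) (f : G m → ℂ) (n : ℕ) : ℝ :=
  ⨆ t ∈ I m n, (eLpNorm (fun x => f (x + t) - f x) p μ).toReal


-- ## Auxiliary development

variable {m : ℕ → ℕ}

lemma M_zero : M m 0 = 1 := rfl
lemma M_succ (k : ℕ) : M m (k+1) = m k * M m k := rfl

section arith
variable (hm : ∀ k, 2 ≤ m k)
set_option linter.unusedSectionVars false
include hm

lemma M_pos : ∀ k, 0 < M m k
  | 0 => Nat.one_pos
  | k + 1 => Nat.mul_pos (lt_of_lt_of_le Nat.zero_lt_two (hm k)) (M_pos k)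

lemma two_pow_le_M : ∀ k, 2 ^ k ≤ M m k
  | 0 => le_rfl
  | k + 1 => by
      rw [pow_succ, M_succ, mul_comm (m k)]
      exact Nat.mul_le_mul (two_pow_le_M k) (hm k)

lemma lt_M_self (n : ℕ) : n < M m n :=
  lt_of_lt_of_le (Nat.lt_two_pow_self) (two_pow_le_M hm n)

lemma M_le_M {s n : ℕ} (h : s ≤ n) : M m s ≤ M m n := by
  induction n with
  | zero => simpa using (Nat.le_zero.mp h) ▸ le_rfl
  | succ n ih =>
    rcases Nat.lt_or_ge s (n+1) with h' | h'
    · calc M m s ≤ M m n := ih (Nat.lt_succ_iff.mp h')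
        _ ≤ m n * M m n := Nat.le_mul_of_pos_left _ (lt_of_lt_of_le Nat.zero_lt_two (hm n))
        _ = M m (n+1) := rfl
    · have : s = n + 1 := le_antisymm h h'
      simp [this]

lemma M_mul_prod {s n : ℕ} (h : s ≤ n) : M m n = M m s * ∏ i ∈ Finset.Ico s n, m i := by
  induction n with
  | zero => simp [Nat.le_zero.mp h]
  | succ n ih =>
    rcases Nat.lt_or_ge s (n+1) with h' | h'
    · have hs : s ≤ n := Nat.lt_succ_iff.mp h'
      rw [Finset.prod_Ico_succ_top hs, M_succ, ih hs]; ring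
    · have : s = n + 1 := le_antisymm h h'
      simp [this]

lemma M_dvd {s n : ℕ} (h : s ≤ n) : M m s ∣ M m n :=
  ⟨∏ i ∈ Finset.Ico s n, m i, M_mul_prod hm h⟩

lemma two_M_le (k : ℕ) : 2 * M m k ≤ M m (k+1) := by
  rw [M_succ]; exact Nat.mul_le_mul_right _ (hm k)

lemma sum_M_le : ∀ i : ℕ, ∑ l ∈ Finset.range (i+1), M m l ≤ 2 * M m i
  | 0 => by simp [M_zero]
  | i + 1 => by
    rw [Finset.sum_range_succ]
    have h1 := sum_M_le i
    have h2 := two_M_le hm i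
    omega

lemma digit_lt (n j : ℕ) : digit m n j < m j :=
  Nat.mod_lt _ (lt_of_lt_of_le Nat.zero_lt_two (hm j))

omit hm in
lemma digit_zero' (j : ℕ) : digit m 0 j = 0 := by simp [digit]

lemma digit_eq_zero_of_lt {n j : ℕ} (h : n < M m j) : digit m n j = 0 := by
  simp [digit, Nat.div_eq_of_lt h]

lemma digit_eq_div {n K : ℕ} (h : n < M m (K+1)) : digit m n K = n / M m K := by
  have : n / M m K < m K := by
    rw [Nat.div_lt_iff_lt_mul (M_pos hm K)]
    rw [M_succ] at h; omega
  simp [digit, Nat.mod_eq_of_lt this]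

lemma digit_add_left {a r i : ℕ} (h : M m (i+1) ∣ a) : digit m (a + r) i = digit m r i := by
  have hdvd : M m i ∣ a := dvd_trans (M_dvd hm (Nat.le_succ i)) h
  obtain ⟨c, hc⟩ := h
  have h1 : (a + r) / M m i = a / M m i + r / M m i := by
    rw [Nat.add_div_of_dvd_right hdvd]
  have h2 : a / M m i = m i * c := by
    rw [hc, M_succ, mul_assoc, mul_comm (m i), mul_assoc, Nat.mul_div_cancel_left _ (M_pos hm i), mul_comm]
  simp [digit, h1, h2, Nat.mul_add_mod]

lemma digit_eq_zero_of_dvd {a i : ℕ} (h : M m (i+1) ∣ a) : digit m a i = 0 := by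
  have := digit_add_left (m := m) hm (r := 0) h
  simpa [digit_zero'] using this

lemma digit_add_of {l a b : ℕ} (ha : M m l ∣ a) (hb : b < M m l) (i : ℕ) :
    digit m (a + b) i = digit m a i + digit m b i := by
  rcases Nat.lt_or_ge i l with hil | hli
  · -- i < l : digit a i = 0, digit (a+b) i = digit b i
    have hdvd : M m (i+1) ∣ a := dvd_trans (M_dvd hm hil) ha
    rw [digit_add_left hm hdvd, digit_eq_zero_of_dvd hm hdvd, Nat.zero_add]
  · -- l ≤ i : digit b i = 0, (a+b)/M_i = a/M_i
    have hMl : M m l ∣ M m i := M_dvd hm hli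
    have hb0 : digit m b i = 0 := digit_eq_zero_of_lt hm (lt_of_lt_of_le hb (M_le_M hm hli))
    have hmod : M m l ∣ a % M m i := (Nat.dvd_mod_iff hMl).mpr ha
    have hlt : a % M m i + b < M m i := by
      have h1 : a % M m i < M m i := Nat.mod_lt _ (M_pos hm i)
      obtain ⟨t, ht⟩ := hmod
      obtain ⟨u, hu⟩ := hMl
      have hu0 : 0 < u := by
        rcases Nat.eq_zero_or_pos u with h0 | h0
        · exfalso; rw [h0, mul_zero] at hu; exact (Nat.lt_irrefl 0 (hu ▸ M_pos hm i))
        · exact h0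
      have : t < u := by
        by_contra hc
        push_neg at hc
        have : M m i ≤ a % M m i := by
          rw [ht, hu]; exact Nat.mul_le_mul_left _ hc
        omega
      have : t + 1 ≤ u := this
      have : M m l * (t+1) ≤ M m l * u := Nat.mul_le_mul_left _ this
      rw [ht]
      calc M m l * t + b < M m l * t + M m l := by omega
        _ = M m l * (t+1) := by ring
        _ ≤ M m l * u := this
        _ = M m i := hu.symm
    have hdiv : (a + b) / M m i = a / M m i := by
      rw [Nat.add_div (M_pos hm i)]
      have hb' : b % M m i = b := Nat.mod_eq_of_lt (lt_of_lt_of_le hb (M_le_M hm hli))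
      have hbdiv : b / M m i = 0 := Nat.div_eq_of_lt (lt_of_lt_of_le hb (M_le_M hm hli))
      rw [hbdiv, hb']
      simp only [Nat.add_zero]
      have : ¬ (M m i ≤ a % M m i + b) := not_le.mpr hlt
      simp [this]
    have hbdiv : b / M m i = 0 := Nat.div_eq_of_lt (lt_of_lt_of_le hb (M_le_M hm hli))
    simp [digit, hdiv, hbdiv]

lemma digit_mul_M {v l : ℕ} (hv : v < m l) : digit m (v * M m l) l = v := by
  simp [digit, Nat.mul_div_left v (M_pos hm l), Nat.mod_eq_of_lt hv]

lemma digit_mul_M_ne {v l i : ℕ} (hv : v < m l) (hne : i ≠ l) : digit m (v * M m l) i = 0 := by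
  rcases Nat.lt_or_ge i l with hil | hli
  · exact digit_eq_zero_of_dvd hm (dvd_trans (M_dvd hm hil) (Dvd.intro_left v rfl))
  · have : l < i := lt_of_le_of_ne hli (Ne.symm hne)
    have : l + 1 ≤ i := this
    exact digit_eq_zero_of_lt hm (by
      calc v * M m l < m l * M m l := (Nat.mul_lt_mul_right (M_pos hm l)).mpr hv
        _ = M m (l+1) := rfl
        _ ≤ M m i := M_le_M hm this)

def trunc (m : ℕ → ℕ) (n l : ℕ) : ℕ := (n / M m (l+1)) * M m (l+1)

omit hm in
lemma trunc_le (n l : ℕ) : trunc m n l ≤ n := Nat.div_mul_le_self _ _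

omit hm in
lemma M_dvd_trunc (n l : ℕ) : M m (l+1) ∣ trunc m n l := Dvd.intro_left _ rfl

omit hm in
lemma trunc_eq_zero {n l : ℕ} (h : n < M m (l+1)) : trunc m n l = 0 := by
  simp [trunc, Nat.div_eq_of_lt h]

omit hm in
lemma trunc_add_of_dvd {a l : ℕ} (h : M m (l+1) ∣ a) (r : ℕ) :
    trunc m (a + r) l = a + trunc m r l := by
  unfold trunc
  rw [Nat.add_div_of_dvd_right h, add_mul, Nat.div_mul_cancel h]

end arith


section rad
variable (hm : ∀ k, 2 ≤ m k)
set_option linter.unusedSectionVars false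
include hm

lemma m_ne_zero (k : ℕ) : (m k : ℂ) ≠ 0 := by
  have := hm k
  exact_mod_cast (by omega : m k ≠ 0)

lemma rad_eq (k : ℕ) (x : G m) :
    rad m k x = Complex.exp (((2 * Real.pi * ((x k).val : ℝ) / (m k : ℝ) : ℝ) : ℂ) * Complex.I) := by
  unfold rad
  congr 1
  push_cast
  ring

lemma rad_norm (k : ℕ) (x : G m) : ‖rad m k x‖ = 1 := by
  rw [rad_eq hm, Complex.norm_exp_ofReal_mul_I]

lemma rad_of_zero {k : ℕ} {x : G m} (h : x k = 0) : rad m k x = 1 := by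
  haveI : NeZero (m k) := ⟨by have := hm k; omega⟩
  unfold rad
  rw [h, ZMod.val_zero]
  simp

lemma rad_pow_card (k : ℕ) (x : G m) : rad m k x ^ (m k) = 1 := by
  unfold rad
  rw [← Complex.exp_nat_mul]
  have hne : (m k : ℂ) ≠ 0 := m_ne_zero hm k
  have : (m k : ℂ) * (2 * Real.pi * Complex.I * ((x k).val : ℂ) / (m k : ℂ))
      = ((x k).val : ℂ) * (2 * Real.pi * Complex.I) := by
    field_simp
  rw [this]
  exact_mod_cast Complex.exp_int_mul_two_pi_mul_I ((x k).val : ℤ)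

lemma rad_ne_one {k : ℕ} {x : G m} (h : x k ≠ 0) : rad m k x ≠ 1 := by
  haveI : NeZero (m k) := ⟨by have := hm k; omega⟩
  intro hc
  rw [rad_eq hm, Complex.exp_eq_one_iff] at hc
  obtain ⟨n, hn⟩ := hc
  set v : ℝ := ((x k).val : ℝ) with hv
  set c : ℝ := ((m k : ℕ) : ℝ) with hcdef
  have hcpos : (0:ℝ) < c := by
    have := hm k
    rw [hcdef]; exact_mod_cast (by omega : 0 < m k)
  have hcne : c ≠ 0 := hcpos.ne'
  have h3 : ((2 * Real.pi * v / c : ℝ) : ℂ) * Complex.I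
      = (((n : ℝ) * (2 * Real.pi) : ℝ) : ℂ) * Complex.I := by
    rw [hn]; push_cast; ring
  have h2 := mul_right_cancel₀ Complex.I_ne_zero h3
  have h4 : 2 * Real.pi * v / c = (n:ℝ) * (2 * Real.pi) := Complex.ofReal_inj.mp h2
  have h5 : v = (n:ℝ) * c := by
    apply mul_left_cancel₀ (show (2 * Real.pi) ≠ 0 by positivity)
    field_simp at h4
    linear_combination (2 * Real.pi) * h4
  have hv1 : 0 < v := by
    rcases Nat.eq_zero_or_pos (x k).val with h0 | h0
    · exact absurd ((ZMod.val_eq_zero _).mp h0) h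
    · rw [hv]; exact_mod_cast h0
  have hv2 : v < c := by
    rw [hv, hcdef]; exact_mod_cast ZMod.val_lt (x k)
  rcases Int.lt_or_le n 1 with hn1 | hn1
  · have hn0 : (n:ℝ) ≤ 0 := by exact_mod_cast (by omega : n ≤ 0)
    nlinarith
  · have hn0 : (1:ℝ) ≤ (n:ℝ) := by exact_mod_cast hn1
    nlinarith

lemma geom_rad (k : ℕ) (x : G m) :
    ∑ u ∈ Finset.range (m k), rad m k x ^ u = if x k = 0 then (m k : ℂ) else 0 := by
  rcases eq_or_ne (x k) 0 with h | h
  · simp [rad_of_zero hm h, h]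
  · rw [if_neg h]
    have h1 : rad m k x ≠ 1 := rad_ne_one hm h
    have := geom_sum_eq h1 (m k)
    rw [this, rad_pow_card hm]
    simp

end rad

open scoped Classical

section psiD
variable (hm : ∀ k, 2 ≤ m k)
set_option linter.unusedSectionVars false
include hm

lemma psi_eq_prod {n N : ℕ} (h : n < M m N) (x : G m) :
    psi m n x = ∏ k ∈ Finset.range N, rad m k x ^ digit m n k := by
  apply finprod_eq_prod_of_mulSupport_subset
  intro k hk
  simp only [Function.mem_mulSupport] at hk
  simp only [Finset.coe_range, Set.mem_Iio]
  by_contra hkN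
  push_neg at hkN
  exact hk (by rw [digit_eq_zero_of_lt hm (lt_of_lt_of_le h (M_le_M hm hkN)), pow_zero])

lemma psi_zero (x : G m) : psi m 0 x = 1 := by
  rw [psi_eq_prod hm (show 0 < M m 0 from Nat.one_pos) x]
  simp

lemma psi_norm (n : ℕ) (x : G m) : ‖psi m n x‖ = 1 := by
  rw [psi_eq_prod hm (lt_M_self hm n) x, norm_prod]
  rw [Finset.prod_congr rfl (fun k _ => by rw [norm_pow, rad_norm hm, one_pow])]
  simp

lemma psi_mul {l a b : ℕ} (ha : M m l ∣ a) (hb : b < M m l) (x : G m) :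
    psi m (a + b) x = psi m a x * psi m b x := by
  have hab : a + b < M m (a + b) := lt_M_self hm (a+b)
  rw [psi_eq_prod hm hab x,
    psi_eq_prod hm (lt_of_le_of_lt (Nat.le_add_right a b) hab) x,
    psi_eq_prod hm (lt_of_le_of_lt (Nat.le_add_left b a) hab) x,
    ← Finset.prod_mul_distrib]
  exact Finset.prod_congr rfl fun k _ => by rw [digit_add_of hm ha hb, pow_add]

lemma psi_mul_M {v l : ℕ} (hv : v < m l) (x : G m) :
    psi m (v * M m l) x = rad m l x ^ v := by
  have hlt : v * M m l < M m (l+1) := by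
    calc v * M m l < m l * M m l := (Nat.mul_lt_mul_right (M_pos hm l)).mpr hv
      _ = M m (l+1) := rfl
  rw [psi_eq_prod hm hlt x]
  rw [Finset.prod_eq_single_of_mem l (Finset.self_mem_range_succ l)
    (fun k _ hk => by rw [digit_mul_M_ne hm hv hk, pow_zero]), digit_mul_M hm hv]

omit hm in
lemma sum_range_mul' {β : Type*} [AddCommMonoid β] (f : ℕ → β) (a b : ℕ) :
    ∑ w ∈ Finset.range (a * b), f w
      = ∑ u ∈ Finset.range a, ∑ v ∈ Finset.range b, f (u * b + v) := by
  induction a with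
  | zero => simp
  | succ a ih =>
    rw [Finset.sum_range_succ, ← ih, Nat.succ_mul, Finset.sum_range_add]

lemma D_split {l a b : ℕ} (ha : M m l ∣ a) (hb : b ≤ M m l) (x : G m) :
    D m (a + b) x = D m a x + psi m a x * D m b x := by
  unfold D
  rw [Finset.sum_range_add, Finset.mul_sum]
  congr 1
  exact Finset.sum_congr rfl fun c hc =>
    psi_mul hm ha (lt_of_lt_of_le (Finset.mem_range.mp hc) hb) x

lemma sumPsi {s n : ℕ} (h : s ≤ n) (x : G m) :
    ∑ w ∈ Finset.range (∏ i ∈ Finset.Ico s n, m i), psi m (w * M m s) x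
      = ∏ i ∈ Finset.Ico s n, (if x i = 0 then (m i : ℂ) else 0) := by
  induction n, h using Nat.le_induction with
  | base => simp [psi_zero hm x]
  | succ n hsn ih =>
    rw [Finset.prod_Ico_succ_top hsn, Finset.prod_Ico_succ_top hsn,
      mul_comm (∏ i ∈ Finset.Ico s n, m i) (m n), sum_range_mul']
    have hMn : (∏ i ∈ Finset.Ico s n, m i) * M m s = M m n := by
      rw [mul_comm]; exact (M_mul_prod hm hsn).symm
    have hcong : ∀ u ∈ Finset.range (m n), ∀ w ∈ Finset.range (∏ i ∈ Finset.Ico s n, m i),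
        psi m ((u * (∏ i ∈ Finset.Ico s n, m i) + w) * M m s) x
          = rad m n x ^ u * psi m (w * M m s) x := by
      intro u hu w hw
      have h1 : (u * (∏ i ∈ Finset.Ico s n, m i) + w) * M m s
          = u * M m n + w * M m s := by
        rw [add_mul, mul_assoc, hMn]
      have h2 : w * M m s < M m n := by
        rw [← hMn]
        exact (Nat.mul_lt_mul_right (M_pos hm s)).mpr (Finset.mem_range.mp hw)
      rw [h1, psi_mul hm (Dvd.intro_left u rfl) h2 x,
        psi_mul_M hm (Finset.mem_range.mp hu) x]
    calc ∑ u ∈ Finset.range (m n), ∑ w ∈ Finset.range (∏ i ∈ Finset.Ico s n, m i),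
          psi m ((u * (∏ i ∈ Finset.Ico s n, m i) + w) * M m s) x
        = ∑ u ∈ Finset.range (m n), ∑ w ∈ Finset.range (∏ i ∈ Finset.Ico s n, m i),
            rad m n x ^ u * psi m (w * M m s) x := by
          exact Finset.sum_congr rfl fun u hu => Finset.sum_congr rfl fun w hw => hcong u hu w hw
      _ = (∑ u ∈ Finset.range (m n), rad m n x ^ u)
            * ∑ w ∈ Finset.range (∏ i ∈ Finset.Ico s n, m i), psi m (w * M m s) x := by
          rw [Finset.sum_mul]
          exact Finset.sum_congr rfl fun u _ => by rw [Finset.mul_sum]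
      _ = (∏ i ∈ Finset.Ico s n, (if x i = 0 then (m i : ℂ) else 0))
            * (if x n = 0 then (m n : ℂ) else 0) := by
          rw [ih, geom_rad hm n x, mul_comm]

lemma D_M (n : ℕ) (x : G m) :
    D m (M m n) x = if x ∈ I m n then (M m n : ℂ) else 0 := by
  have h0 : (∏ i ∈ Finset.Ico 0 n, m i) = M m n := by
    have := M_mul_prod hm (Nat.zero_le n)
    rw [this, M_zero, one_mul]
  have hs := sumPsi hm (Nat.zero_le n) x
  rw [h0] at hs
  have hMz : ∀ w : ℕ, w * M m 0 = w := fun w => by rw [M_zero, mul_one]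
  unfold D
  rw [show (∑ k ∈ Finset.range (M m n), psi m k x)
      = ∑ w ∈ Finset.range (M m n), psi m (w * M m 0) x from
    Finset.sum_congr rfl fun w _ => by rw [hMz w], hs]
  rcases em (x ∈ I m n) with hx | hx
  · rw [if_pos hx]
    rw [Finset.prod_congr rfl (fun i hi => if_pos (hx i (Finset.mem_Ico.mp hi).2))]
    rw [← h0]
    push_cast
    rfl
  · rw [if_neg hx]
    simp only [I, Set.mem_setOf_eq, not_forall] at hx
    obtain ⟨i, hi, hxi⟩ := hx
    exact Finset.prod_eq_zero (Finset.mem_Ico.mpr ⟨Nat.zero_le i, hi⟩) (if_neg hxi)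

lemma D_M_norm (n : ℕ) (x : G m) :
    ‖D m (M m n) x‖ = (M m n : ℝ) * (if x ∈ I m n then (1:ℝ) else 0) := by
  rw [D_M hm n x]
  rcases em (x ∈ I m n) with hx | hx
  · rw [if_pos hx, if_pos hx, mul_one]
    simp
  · rw [if_neg hx, if_neg hx, mul_zero, norm_zero]

end psiD


def indI (m : ℕ → ℕ) (l : ℕ) (x : G m) : ℝ := if x ∈ I m l then 1 else 0

def Jset (m : ℕ → ℕ) (s n : ℕ) : Set (G m) := {y | ∀ i < n, i ≠ s → y i = 0}

def indJ (m : ℕ → ℕ) (s n : ℕ) (x : G m) : ℝ := if x ∈ Jset m s n then 1 else 0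

lemma indI_nonneg {l : ℕ} {x : G m} : 0 ≤ indI m l x := by
  unfold indI; split <;> norm_num

lemma indJ_nonneg {s n : ℕ} {x : G m} : 0 ≤ indJ m s n x := by
  unfold indJ; split <;> norm_num

lemma Jset_subset_I {s n : ℕ} (h : s ≤ n) : Jset m s n ⊆ I m s := by
  intro y hy k hk
  exact hy k (lt_of_lt_of_le hk h) (by omega)

section Drepr
variable (hm : ∀ k, 2 ≤ m k)
set_option linter.unusedSectionVars false
include hm

lemma D_scaled {d N : ℕ} (hd : d ≤ m N) (x : G m) :
    D m (d * M m N) x = (∑ v ∈ Finset.range d, rad m N x ^ v) * D m (M m N) x := by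
  unfold D
  rw [sum_range_mul', Finset.sum_mul]
  refine Finset.sum_congr rfl fun v hv => ?_
  rw [Finset.mul_sum]
  refine Finset.sum_congr rfl fun c hc => ?_
  rw [psi_mul hm (Dvd.intro_left v rfl) (Finset.mem_range.mp hc) x,
    psi_mul_M hm (lt_of_lt_of_le (Finset.mem_range.mp hv) hd) x]

lemma D_repr {N : ℕ} : ∀ {n : ℕ}, n < M m N → ∀ x : G m,
    D m n x = ∑ l ∈ Finset.range N,
      psi m (trunc m n l) x
        * ((∑ v ∈ Finset.range (digit m n l), rad m l x ^ v) * D m (M m l) x) := by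
  induction N with
  | zero =>
    intro n h x
    have hn : n = 0 := by
      have : M m 0 = 1 := rfl
      omega
    subst hn
    simp [D]
  | succ N ih =>
    intro n h x
    set d := n / M m N with hd
    set r := n % M m N with hr
    have hdm : d < m N := by
      rw [hd, Nat.div_lt_iff_lt_mul (M_pos hm N)]
      calc n < M m (N+1) := h
        _ = m N * M m N := rfl
    have hrM : r < M m N := Nat.mod_lt _ (M_pos hm N)
    have hn : d * M m N + r = n := by
      rw [hd, hr, mul_comm]; exact Nat.div_add_mod n (M m N)
    have hsplit : D m n x = D m (d * M m N) x + psi m (d * M m N) x * D m r x := by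
      conv_lhs => rw [← hn]
      exact D_split hm (Dvd.intro_left d rfl) hrM.le x
    have hsum : psi m (d * M m N) x
        * (∑ l ∈ Finset.range N, psi m (trunc m r l) x
            * ((∑ v ∈ Finset.range (digit m r l), rad m l x ^ v) * D m (M m l) x))
        = ∑ l ∈ Finset.range N, psi m (trunc m n l) x
            * ((∑ v ∈ Finset.range (digit m n l), rad m l x ^ v) * D m (M m l) x) := by
      rw [Finset.mul_sum]
      refine Finset.sum_congr rfl fun l hl => ?_
      have hlN : l < N := Finset.mem_range.mp hl
      have hdvd : M m (l+1) ∣ d * M m N := dvd_mul_of_dvd_right (M_dvd hm hlN) d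
      have h1 : digit m n l = digit m r l := by
        rw [← hn, digit_add_left hm hdvd]
      have h2 : trunc m n l = d * M m N + trunc m r l := by
        rw [← hn, trunc_add_of_dvd hdvd]
      have h3 : psi m (trunc m n l) x = psi m (d * M m N) x * psi m (trunc m r l) x := by
        rw [h2]
        exact psi_mul hm (Dvd.intro_left d rfl)
          (lt_of_le_of_lt (trunc_le _ _) hrM) x
      rw [h1, h3]
      ring
    rw [hsplit, ih hrM x, hsum, Finset.sum_range_succ, trunc_eq_zero h,
      digit_eq_div hm h, ← hd, psi_zero hm x, one_mul, ← D_scaled hm hdm.le x]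
    exact add_comm _ _

lemma geom_partial_norm_le {d : ℕ} (l : ℕ) (x : G m) :
    ‖∑ v ∈ Finset.range d, rad m l x ^ v‖ ≤ (d : ℝ) := by
  refine le_trans (norm_sum_le _ _) ?_
  rw [Finset.sum_congr rfl (fun v _ => by rw [norm_pow, rad_norm hm, one_pow])]
  simp

lemma D_norm_le {N n : ℕ} (h : n < M m N) (x : G m) :
    ‖D m n x‖ ≤ ∑ l ∈ Finset.range N,
      (digit m n l : ℝ) * ((M m l : ℝ) * indI m l x) := by
  rw [D_repr hm h x]
  refine le_trans (norm_sum_le _ _) (Finset.sum_le_sum fun l _ => ?_)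
  rw [norm_mul, norm_mul, psi_norm hm, one_mul, D_M_norm hm]
  have h1 := geom_partial_norm_le hm (d := digit m n l) l x
  have h2 : (0:ℝ) ≤ (M m l : ℝ) * (if x ∈ I m l then (1:ℝ) else 0) := by
    have : (0:ℝ) ≤ (if x ∈ I m l then (1:ℝ) else 0) := by split <;> norm_num
    positivity
  calc ‖∑ v ∈ Finset.range (digit m n l), rad m l x ^ v‖
        * ((M m l : ℝ) * if x ∈ I m l then (1:ℝ) else 0)
      ≤ (digit m n l : ℝ) * ((M m l : ℝ) * if x ∈ I m l then (1:ℝ) else 0) :=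
        mul_le_mul_of_nonneg_right h1 h2
    _ = (digit m n l : ℝ) * ((M m l : ℝ) * indI m l x) := by rw [indI]

lemma norm_sumPsi_le {s l : ℕ} (hsl : s + 1 ≤ l) (x : G m) :
    ‖∑ w ∈ Finset.range (∏ i ∈ Finset.Ico (s+1) l, m i), psi m (w * M m (s+1)) x‖
      ≤ ((∏ i ∈ Finset.Ico (s+1) l, m i : ℕ) : ℝ)
        * (if ∀ i ∈ Finset.Ico (s+1) l, x i = 0 then (1:ℝ) else 0) := by
  rw [sumPsi hm hsl x]
  rcases em (∀ i ∈ Finset.Ico (s+1) l, x i = 0) with hx | hx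
  · rw [if_pos hx, mul_one]
    rw [Finset.prod_congr rfl (fun i hi => if_pos (hx i hi))]
    rw [show (∏ i ∈ Finset.Ico (s+1) l, (m i : ℂ)) = ((∏ i ∈ Finset.Ico (s+1) l, m i : ℕ) : ℂ) by push_cast; rfl]
    rw [Complex.norm_natCast]
  · rw [if_neg hx, mul_zero]
    push_neg at hx
    obtain ⟨i, hi, hxi⟩ := hx
    have hz : (∏ i ∈ Finset.Ico (s+1) l, (if x i = 0 then (m i : ℂ) else 0)) = 0 :=
      Finset.prod_eq_zero hi (by rw [if_neg hxi])
    rw [hz, norm_zero]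

lemma sumD_norm_le (l : ℕ) (x : G m) :
    ‖∑ b ∈ Finset.range (M m l), D m b x‖
      ≤ ∑ s ∈ Finset.range l,
          (m s : ℝ)^2 * (M m s : ℝ)^2 * ((∏ i ∈ Finset.Ico (s+1) l, m i : ℕ) : ℝ)
            * indJ m s l x := by
  have hrepr : ∀ b ∈ Finset.range (M m l), D m b x
      = ∑ s ∈ Finset.range l, psi m (trunc m b s) x
          * ((∑ v ∈ Finset.range (digit m b s), rad m s x ^ v) * D m (M m s) x) :=
    fun b hb => D_repr hm (Finset.mem_range.mp hb) x
  rw [Finset.sum_congr rfl hrepr, Finset.sum_comm]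
  refine le_trans (norm_sum_le _ _) (Finset.sum_le_sum fun s hs => ?_)
  have hsl : s + 1 ≤ l := Finset.mem_range.mp hs
  have hfact : ∑ b ∈ Finset.range (M m l),
      psi m (trunc m b s) x
        * ((∑ v ∈ Finset.range (digit m b s), rad m s x ^ v) * D m (M m s) x)
      = (∑ b ∈ Finset.range (M m l),
          psi m (trunc m b s) x * ∑ v ∈ Finset.range (digit m b s), rad m s x ^ v)
        * D m (M m s) x := by
    rw [Finset.sum_mul]
    exact Finset.sum_congr rfl fun b _ => (mul_assoc _ _ _).symm
  have hMl : M m l = (∏ i ∈ Finset.Ico (s+1) l, m i) * M m (s+1) := by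
    rw [mul_comm]; exact M_mul_prod hm hsl
  have key : (∑ b ∈ Finset.range (M m l),
      psi m (trunc m b s) x * ∑ v ∈ Finset.range (digit m b s), rad m s x ^ v)
      = (∑ w ∈ Finset.range (∏ i ∈ Finset.Ico (s+1) l, m i), psi m (w * M m (s+1)) x)
        * ∑ d ∈ Finset.range (m s), (M m s : ℂ) * ∑ v ∈ Finset.range d, rad m s x ^ v := by
    rw [hMl, sum_range_mul', Finset.sum_mul]
    refine Finset.sum_congr rfl fun w hw => ?_
    have hdvdw : M m (s+1) ∣ w * M m (s+1) := Dvd.intro_left w rfl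
    have hc : ∀ d ∈ Finset.range (m s), ∀ c ∈ Finset.range (M m s),
        psi m (trunc m (w * M m (s+1) + (d * M m s + c)) s) x
          * ∑ v ∈ Finset.range (digit m (w * M m (s+1) + (d * M m s + c)) s), rad m s x ^ v
        = psi m (w * M m (s+1)) x * ∑ v ∈ Finset.range d, rad m s x ^ v := by
      intro d hd c hcm
      have hcM : c < M m s := Finset.mem_range.mp hcm
      have hdMc : d * M m s + c < M m (s+1) := by
        have hd' : d < m s := Finset.mem_range.mp hd
        calc d * M m s + c < d * M m s + M m s := by omega
          _ = (d + 1) * M m s := by ring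
          _ ≤ m s * M m s := Nat.mul_le_mul_right _ hd'
          _ = M m (s+1) := rfl
      have htr : trunc m (w * M m (s+1) + (d * M m s + c)) s = w * M m (s+1) := by
        rw [trunc_add_of_dvd hdvdw, trunc_eq_zero hdMc, add_zero]
      have hdig : digit m (w * M m (s+1) + (d * M m s + c)) s = d := by
        rw [digit_add_left hm hdvdw,
          digit_add_of hm (Dvd.intro_left d rfl) hcM,
          digit_mul_M hm (Finset.mem_range.mp hd),
          digit_eq_zero_of_lt hm hcM, Nat.add_zero]
      rw [htr, hdig]
    have e1 : ∑ t ∈ Finset.range (M m (s+1)),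
          (psi m (trunc m (w * M m (s+1) + t) s) x
            * ∑ v ∈ Finset.range (digit m (w * M m (s+1) + t) s), rad m s x ^ v)
        = ∑ d ∈ Finset.range (m s), ∑ c ∈ Finset.range (M m s),
            (psi m (trunc m (w * M m (s+1) + (d * M m s + c)) s) x
              * ∑ v ∈ Finset.range (digit m (w * M m (s+1) + (d * M m s + c)) s), rad m s x ^ v) :=
      sum_range_mul' _ (m s) (M m s)
    rw [e1, Finset.sum_congr rfl (fun d hd => Finset.sum_congr rfl (hc d hd)), Finset.mul_sum]
    refine Finset.sum_congr rfl fun d _ => ?_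
    rw [Finset.sum_const, Finset.card_range, nsmul_eq_mul]
    push_cast
    ring
  rw [hfact, key]
  rw [norm_mul, norm_mul]
  have hb1 := norm_sumPsi_le hm hsl x
  have hb2 : ‖∑ d ∈ Finset.range (m s), (M m s : ℂ) * ∑ v ∈ Finset.range d, rad m s x ^ v‖
      ≤ (m s : ℝ) * ((M m s : ℝ) * (m s : ℝ)) := by
    refine le_trans (norm_sum_le _ _) ?_
    have : ∀ d ∈ Finset.range (m s),
        ‖(M m s : ℂ) * ∑ v ∈ Finset.range d, rad m s x ^ v‖
          ≤ (M m s : ℝ) * (m s : ℝ) := by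
      intro d hd
      rw [norm_mul, Complex.norm_natCast]
      refine mul_le_mul_of_nonneg_left ?_ (by positivity)
      refine le_trans (geom_partial_norm_le hm s x) ?_
      exact_mod_cast (Finset.mem_range.mp hd).le
    refine le_trans (Finset.sum_le_sum this) ?_
    rw [Finset.sum_const, Finset.card_range, nsmul_eq_mul]
  have hb3 : ‖D m (M m s) x‖ = (M m s : ℝ) * (if x ∈ I m s then (1:ℝ) else 0) :=
    D_M_norm hm s x
  have hind : (if ∀ i ∈ Finset.Ico (s+1) l, x i = 0 then (1:ℝ) else 0)
      * (if x ∈ I m s then (1:ℝ) else 0) = indJ m s l x := by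
    unfold indJ Jset
    rcases em (x ∈ {y : G m | ∀ i < l, i ≠ s → y i = 0}) with hx | hx
    · rw [if_pos hx]
      have h1 : ∀ i ∈ Finset.Ico (s+1) l, x i = 0 := fun i hi => by
        have := Finset.mem_Ico.mp hi
        exact hx i this.2 (by omega)
      have h2 : x ∈ I m s := fun k hk => hx k (by omega) (by omega)
      rw [if_pos h1, if_pos h2, mul_one]
    · rw [if_neg hx]
      simp only [Set.mem_setOf_eq, not_forall] at hx
      obtain ⟨i, hil, hins, hxi⟩ := hx
      rcases Nat.lt_or_ge i (s+1) with h' | h'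
      · have : i < s := by omega
        have : x ∉ I m s := fun hc => hxi (hc i this)
        rw [if_neg this, mul_zero]
      · have : ¬ (∀ i ∈ Finset.Ico (s+1) l, x i = 0) := by
          push_neg
          exact ⟨i, Finset.mem_Ico.mpr ⟨h', hil⟩, hxi⟩
        rw [if_neg this, zero_mul]
  calc ‖∑ w ∈ Finset.range (∏ i ∈ Finset.Ico (s+1) l, m i), psi m (w * M m (s+1)) x‖
        * ‖∑ d ∈ Finset.range (m s), (M m s : ℂ) * ∑ v ∈ Finset.range d, rad m s x ^ v‖
        * ‖D m (M m s) x‖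
      ≤ (((∏ i ∈ Finset.Ico (s+1) l, m i : ℕ) : ℝ)
          * (if ∀ i ∈ Finset.Ico (s+1) l, x i = 0 then (1:ℝ) else 0))
        * ((m s : ℝ) * ((M m s : ℝ) * (m s : ℝ)))
        * ((M m s : ℝ) * (if x ∈ I m s then (1:ℝ) else 0)) := by
        rw [hb3]
        refine mul_le_mul (mul_le_mul hb1 hb2 (norm_nonneg _) ?_) le_rfl ?_ ?_
        · positivity
        · rw [← hb3]; exact norm_nonneg _
        · positivity
    _ = (m s : ℝ)^2 * (M m s : ℝ)^2 * ((∏ i ∈ Finset.Ico (s+1) l, m i : ℕ) : ℝ)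
          * ((if ∀ i ∈ Finset.Ico (s+1) l, x i = 0 then (1:ℝ) else 0)
              * (if x ∈ I m s then (1:ℝ) else 0)) := by ring
    _ = _ := by rw [hind]

end Drepr


lemma trunc_add_digit_mul_le (hm : ∀ k, 2 ≤ m k) (j l : ℕ) :
    trunc m j l + digit m j l * M m l ≤ j := by
  have h1 : digit m j l * M m l ≤ j % M m (l+1) := by
    have hdig : digit m j l = (j % M m (l+1)) / M m l := by
      unfold digit
      rw [show M m (l+1) = m l * M m l from rfl, mul_comm (m l) (M m l),
        Nat.mod_mul_right_div_self]
    rw [hdig]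
    exact Nat.div_mul_le_self _ _
  calc trunc m j l + digit m j l * M m l
      ≤ trunc m j l + j % M m (l+1) := Nat.add_le_add_left h1 _
    _ = j := by
        conv_rhs => rw [← Nat.div_add_mod j (M m (l+1))]
        unfold trunc
        rw [mul_comm]

section measureI
variable (hm : ∀ k, 2 ≤ m k) (μ : Measure (G m)) [IsProbabilityMeasure μ] [μ.IsAddHaarMeasure]
set_option linter.unusedSectionVars false
include hm

lemma measurableSet_I (n : ℕ) : MeasurableSet (I m n) := by
  have h : I m n = ⋂ k ∈ Finset.range n, (fun y : G m => y k) ⁻¹' {0} := by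
    ext y
    simp [I, Set.mem_iInter]
  rw [h]
  refine MeasurableSet.biInter (Finset.range n).countable_toSet (fun k _ => ?_)
  haveI : NeZero (m k) := ⟨by have := hm k; omega⟩
  exact measurable_pi_apply k (measurableSet_singleton 0)

lemma measurableSet_J (s n : ℕ) : MeasurableSet (Jset m s n) := by
  have h : Jset m s n = ⋂ i ∈ Finset.range n, {y : G m | i ≠ s → y i = 0} := by
    ext y
    simp only [Jset, Set.mem_setOf_eq, Set.mem_iInter, Finset.mem_range]
  rw [h]
  refine MeasurableSet.biInter (Finset.range n).countable_toSet (fun i _ => ?_)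
  rcases eq_or_ne i s with rfl | his
  · have h2 : {y : G m | i ≠ i → y i = 0} = Set.univ := by ext y; simp
    rw [h2]; exact MeasurableSet.univ
  · have h2 : {y : G m | i ≠ s → y i = 0} = (fun y : G m => y i) ⁻¹' {0} := by
      ext y; simp [his]
    rw [h2]
    haveI : NeZero (m i) := ⟨by have := hm i; omega⟩
    exact measurable_pi_apply i (measurableSet_singleton 0)

lemma measure_J_eq (s n : ℕ) (hsn : s < n) :
    μ (Jset m s n) = (m s : ℝ≥0∞) * μ (I m n) := by
  classical
  haveI : NeZero (m s) := ⟨by have := hm s; omega⟩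
  set B : ZMod (m s) → Set (G m) := fun u => {y | y ∈ Jset m s n ∧ y s = u} with hB
  have hBmeas : ∀ u, MeasurableSet (B u) := by
    intro u
    have hBu : B u = Jset m s n ∩ ((fun y : G m => y s) ⁻¹' {u}) := rfl
    rw [hBu]
    exact (measurableSet_J hm s n).inter
      (measurable_pi_apply s (measurableSet_singleton u))
  have hdecomp : Jset m s n = ⋃ u : ZMod (m s), B u := by
    ext y
    simp only [hB, Set.mem_iUnion, Set.mem_setOf_eq]
    constructor
    · intro hy; exact ⟨y s, hy, rfl⟩
    · rintro ⟨u, hy, -⟩; exact hy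
  have hBdisj : Pairwise (Function.onFun Disjoint B) := by
    intro u v huv
    simp only [Function.onFun, Set.disjoint_left, hB, Set.mem_setOf_eq]
    rintro y ⟨-, hyu⟩ ⟨-, hyv⟩
    exact huv (hyu ▸ hyv ▸ rfl)
  have hBmeasure : ∀ u, μ (B u) = μ (I m n) := by
    intro u
    have hpre : (fun y : G m => y + (Pi.single s u : G m)) ⁻¹' (B u) = I m n := by
      ext y
      simp only [Set.mem_preimage, hB, Set.mem_setOf_eq, Jset, I, Pi.add_apply]
      constructor
      · rintro ⟨h1', h2'⟩ k hk
        rcases eq_or_ne k s with rfl | hks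
        · have hyu : y k + u = u := by simpa [Pi.single_eq_same] using h2'
          have : y k + u = 0 + u := by rw [zero_add]; exact hyu
          exact add_right_cancel this
        · have := h1' k hk hks
          simpa [Pi.single_eq_of_ne hks] using this
      · intro hy
        refine ⟨fun i hi his => ?_, ?_⟩
        · simp [Pi.single_eq_of_ne his, hy i hi]
        · simp [Pi.single_eq_same, hy s hsn]
    rw [← hpre, measure_preimage_add_right]
  rw [hdecomp, measure_iUnion hBdisj hBmeas]
  simp only [hBmeasure]
  rw [tsum_fintype, Finset.sum_const, Finset.card_univ, ZMod.card, nsmul_eq_mul]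

lemma measure_I_mul (n : ℕ) : (M m n : ℝ≥0∞) * μ (I m n) = 1 := by
  induction n with
  | zero =>
    have h : I m 0 = Set.univ := by
      ext y; simp [I]
    rw [h, measure_univ, M_zero]
    simp
  | succ n ih =>
    have hJ : Jset m n (n+1) = I m n := by
      ext y
      simp only [Jset, I, Set.mem_setOf_eq]
      constructor
      · intro hy k hk; exact hy k (by omega) (by omega)
      · intro hy i hi hin; exact hy i (by omega)
    have h := measure_J_eq hm μ n (n+1) (Nat.lt_succ_self n)
    rw [hJ] at h
    calc (M m (n+1) : ℝ≥0∞) * μ (I m (n+1))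
        = (M m n : ℝ≥0∞) * ((m n : ℝ≥0∞) * μ (I m (n+1))) := by
          rw [show M m (n+1) = m n * M m n from rfl]
          push_cast
          ring
      _ = (M m n : ℝ≥0∞) * μ (I m n) := by rw [← h]
      _ = 1 := ih

lemma measure_I_toReal (n : ℕ) : (μ (I m n)).toReal = ((M m n : ℝ))⁻¹ := by
  have h := measure_I_mul hm μ n
  have h' : (M m n : ℝ) * (μ (I m n)).toReal = 1 := by
    have h2 := congrArg ENNReal.toReal h
    rwa [ENNReal.toReal_mul, show ((M m n : ℝ≥0∞)).toReal = (M m n : ℝ) from rfl, ENNReal.toReal_one] at h2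
  exact (inv_eq_of_mul_eq_one_right h').symm

lemma measure_J_toReal (s n : ℕ) (hsn : s < n) :
    (μ (Jset m s n)).toReal = (m s : ℝ) * ((M m n : ℝ))⁻¹ := by
  rw [measure_J_eq hm μ s n hsn, ENNReal.toReal_mul, measure_I_toReal hm μ n,
    show ((m s : ℝ≥0∞)).toReal = (m s : ℝ) from rfl]

end measureI


section partition
variable (hm : ∀ k, 2 ≤ m k)
set_option linter.unusedSectionVars false
include hm

lemma sum_range_partition : ∀ {K : ℕ} {j : ℕ}, j < M m (K+1) → ∀ (f : ℕ → ℂ),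
    ∑ n ∈ Finset.range j, f n
      = ∑ l ∈ Finset.range (K+1), ∑ a ∈ Finset.range (digit m j l),
          ∑ b ∈ Finset.range (M m l), f (trunc m j l + a * M m l + b) := by
  intro K
  induction K with
  | zero =>
    intro j h f
    have hdig : digit m j 0 = j := by
      have hjm : j < m 0 := by
        have hM : M m (0+1) = m 0 := by rw [M_succ, M_zero, mul_one]
        omega
      unfold digit
      rw [M_zero, Nat.div_one, Nat.mod_eq_of_lt hjm]
    rw [Finset.sum_range_one, hdig, trunc_eq_zero h]
    refine Finset.sum_congr rfl fun a _ => ?_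
    rw [show M m 0 = 1 from rfl, Finset.sum_range_one]
    congr 1
    omega
  | succ K ih =>
    intro j h f
    set d := j / M m (K+1) with hd
    set r := j % M m (K+1) with hr
    have hdm : d < m (K+1) := by
      rw [hd, Nat.div_lt_iff_lt_mul (M_pos hm (K+1))]
      calc j < M m (K+2) := h
        _ = m (K+1) * M m (K+1) := rfl
    have hrM : r < M m (K+1) := Nat.mod_lt _ (M_pos hm (K+1))
    have hj : j = d * M m (K+1) + r := by
      rw [hd, hr, mul_comm]
      exact (Nat.div_add_mod j (M m (K+1))).symm
    have hstep1 : ∑ n ∈ Finset.range j, f n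
        = ∑ n ∈ Finset.range (d * M m (K+1)), f n
          + ∑ i ∈ Finset.range r, f (d * M m (K+1) + i) := by
      conv_lhs => rw [hj]
      exact Finset.sum_range_add f (d * M m (K+1)) r
    have hstep2 : ∑ n ∈ Finset.range (d * M m (K+1)), f n
        = ∑ a ∈ Finset.range d, ∑ b ∈ Finset.range (M m (K+1)), f (a * M m (K+1) + b) :=
      sum_range_mul' f d (M m (K+1))
    have hstep3 : ∑ i ∈ Finset.range r, f (d * M m (K+1) + i)
        = ∑ l ∈ Finset.range (K+1), ∑ a ∈ Finset.range (digit m r l),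
            ∑ b ∈ Finset.range (M m l), f (d * M m (K+1) + (trunc m r l + a * M m l + b)) :=
      ih hrM (fun i => f (d * M m (K+1) + i))
    have hdvd : ∀ l, l < K + 1 → M m (l+1) ∣ d * M m (K+1) :=
      fun l hl => dvd_mul_of_dvd_right (M_dvd hm hl) d
    rw [hstep1, hstep2, hstep3]
    conv_rhs => rw [Finset.sum_range_succ]
    rw [add_comm (∑ a ∈ Finset.range d, ∑ b ∈ Finset.range (M m (K+1)), f (a * M m (K+1) + b))]
    congr 1
    · -- lower digits
      refine Finset.sum_congr rfl fun l hl => ?_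
      have hlK : l < K + 1 := Finset.mem_range.mp hl
      have h1 : digit m j l = digit m r l := by
        rw [hj, digit_add_left hm (hdvd l hlK)]
      have h2 : trunc m j l = d * M m (K+1) + trunc m r l := by
        rw [hj, trunc_add_of_dvd (hdvd l hlK)]
      rw [h1, h2]
      refine Finset.sum_congr rfl fun a _ => Finset.sum_congr rfl fun b _ => ?_
      congr 1
      ring
    · -- top digit
      have h1 : digit m j (K+1) = d := by rw [digit_eq_div hm h, hd]
      have h2 : trunc m j (K+1) = 0 := trunc_eq_zero h
      rw [h1, h2]
      refine Finset.sum_congr rfl fun a _ => Finset.sum_congr rfl fun b _ => ?_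
      congr 1
      omega

lemma D_zero_eval (t : G m) : D m 0 t = 0 := by
  unfold D
  simp

lemma K_pointwise (hk : 1 ≤ j) {k : ℕ} (h2 : j < M m (k+1)) (t : G m) :
    (j : ℝ) * ‖K m j t‖ ≤ ‖D m j t‖
      + ∑ l ∈ Finset.range (k+1), ∑ a ∈ Finset.range (digit m j l),
          ((M m l : ℝ) * ‖D m (trunc m j l + a * M m l) t‖
            + ‖∑ b ∈ Finset.range (M m l), D m b t‖) := by
  have hjC : (j : ℂ) ≠ 0 := by exact_mod_cast (by omega : j ≠ 0)
  have hKnorm : (j : ℝ) * ‖K m j t‖ = ‖∑ n ∈ Finset.Icc 1 j, D m n t‖ := by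
    unfold K
    rw [norm_mul, norm_inv, Complex.norm_natCast]
    rw [← mul_assoc, mul_inv_cancel₀ (by exact_mod_cast (by omega : j ≠ 0) : (j:ℝ) ≠ 0), one_mul]
  rw [hKnorm]
  have hIcc : ∑ n ∈ Finset.Icc 1 j, D m n t
      = ∑ n ∈ Finset.range j, D m n t + D m j t := by
    have h0 : Finset.Icc 0 j = insert 0 (Finset.Icc 1 j) := by
      ext n; simp; omega
    have h1 : ∑ n ∈ Finset.Icc 0 j, D m n t = D m 0 t + ∑ n ∈ Finset.Icc 1 j, D m n t := by
      rw [h0, Finset.sum_insert (by simp)]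
    have h2' : Finset.range (j+1) = Finset.Icc 0 j := by
      ext n; simp
    rw [← h2', Finset.sum_range_succ] at h1
    rw [D_zero_eval hm] at h1
    rw [zero_add] at h1
    rw [← h1]
  rw [hIcc]
  rw [sum_range_partition hm h2 (fun n => D m n t)]
  have hsplit : ∀ l ∈ Finset.range (k+1), ∀ a ∈ Finset.range (digit m j l),
      ∑ b ∈ Finset.range (M m l), D m (trunc m j l + a * M m l + b) t
        = (M m l : ℂ) * D m (trunc m j l + a * M m l) t
          + psi m (trunc m j l + a * M m l) t * ∑ b ∈ Finset.range (M m l), D m b t := by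
    intro l hl a ha
    have hdvd : M m l ∣ trunc m j l + a * M m l :=
      dvd_add (dvd_trans (M_dvd hm (Nat.le_succ l)) (M_dvd_trunc j l)) (Dvd.intro_left a rfl)
    have hb : ∀ b ∈ Finset.range (M m l),
        D m (trunc m j l + a * M m l + b) t
          = D m (trunc m j l + a * M m l) t + psi m (trunc m j l + a * M m l) t * D m b t :=
      fun b hb => D_split hm hdvd (Finset.mem_range.mp hb).le t
    rw [Finset.sum_congr rfl hb, Finset.sum_add_distrib, Finset.sum_const,
      Finset.card_range, nsmul_eq_mul, ← Finset.mul_sum]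
  calc ‖(∑ l ∈ Finset.range (k+1), ∑ a ∈ Finset.range (digit m j l),
          ∑ b ∈ Finset.range (M m l), D m (trunc m j l + a * M m l + b) t) + D m j t‖
      ≤ ‖∑ l ∈ Finset.range (k+1), ∑ a ∈ Finset.range (digit m j l),
          ∑ b ∈ Finset.range (M m l), D m (trunc m j l + a * M m l + b) t‖ + ‖D m j t‖ :=
        norm_add_le _ _
    _ ≤ (∑ l ∈ Finset.range (k+1), ∑ a ∈ Finset.range (digit m j l),
          ((M m l : ℝ) * ‖D m (trunc m j l + a * M m l) t‖
            + ‖∑ b ∈ Finset.range (M m l), D m b t‖)) + ‖D m j t‖ := by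
        gcongr
        refine le_trans (norm_sum_le _ _) (Finset.sum_le_sum fun l hl => ?_)
        refine le_trans (norm_sum_le _ _) (Finset.sum_le_sum fun a ha => ?_)
        rw [hsplit l hl a ha]
        refine le_trans (norm_add_le _ _) ?_
        rw [norm_mul, norm_mul, Complex.norm_natCast, psi_norm hm, one_mul]
    _ = _ := by ring

end partition

lemma sum_triangle_swap {n : ℕ} (f : ℕ → ℕ → ℝ) :
    ∑ l ∈ Finset.range n, ∑ i ∈ Finset.Ico l n, f l i
      = ∑ i ∈ Finset.range n, ∑ l ∈ Finset.range (i+1), f l i := by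
  have h1 : ∀ l, Finset.Ico l n = (Finset.range n).filter (fun i => l ≤ i) := by
    intro l; ext i
    simp only [Finset.mem_Ico, Finset.mem_filter, Finset.mem_range]
    omega
  have h2 : ∀ i ∈ Finset.range n, Finset.range (i+1) = (Finset.range n).filter (fun l => l ≤ i) := by
    intro i hi
    have := Finset.mem_range.mp hi
    ext l
    simp only [Finset.mem_range, Finset.mem_filter]
    omega
  calc ∑ l ∈ Finset.range n, ∑ i ∈ Finset.Ico l n, f l i
      = ∑ l ∈ Finset.range n, ∑ i ∈ Finset.range n, if l ≤ i then f l i else 0 := by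
        refine Finset.sum_congr rfl fun l _ => ?_
        rw [h1 l, Finset.sum_filter]
    _ = ∑ i ∈ Finset.range n, ∑ l ∈ Finset.range n, if l ≤ i then f l i else 0 :=
        Finset.sum_comm
    _ = ∑ i ∈ Finset.range n, ∑ l ∈ Finset.range (i+1), f l i := by
        refine Finset.sum_congr rfl fun i hi => ?_
        rw [h2 i hi, Finset.sum_filter]


section omegaBounds
variable (hm : ∀ k, 2 ≤ m k) (μ : Measure (G m)) [IsProbabilityMeasure μ] [μ.IsAddHaarMeasure]
set_option linter.unusedSectionVars false

lemma omega_nonneg (p : ℝ≥0∞) (f : G m → ℂ) (s : ℕ) : 0 ≤ omega m μ p f s :=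
  Real.iSup_nonneg fun _ => Real.iSup_nonneg fun _ => ENNReal.toReal_nonneg

lemma eLpNorm_shift (p : ℝ≥0∞) {f : G m → ℂ} (hf : AEStronglyMeasurable f μ) (t : G m) :
    eLpNorm (fun x => f (x + t)) p μ = eLpNorm f p μ :=
  eLpNorm_comp_measurePreserving hf (measurePreserving_add_right μ t)

lemma omega_diff_le (p : ℝ≥0∞) (hp1 : 1 ≤ p) {f : G m → ℂ} (hf : MemLp f p μ) (t : G m) :
    (eLpNorm (fun x => f (x + t) - f x) p μ).toReal ≤ 2 * (eLpNorm f p μ).toReal := by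
  have hmeas : AEStronglyMeasurable (fun x => f (x + t)) μ :=
    hf.1.comp_measurePreserving (measurePreserving_add_right μ t)
  have h1 : eLpNorm (fun x => f (x + t) - f x) p μ
      ≤ eLpNorm (fun x => f (x + t)) p μ + eLpNorm f p μ :=
    eLpNorm_sub_le hmeas hf.1 hp1
  have h3 : eLpNorm (fun x => f (x + t) - f x) p μ ≤ 2 * eLpNorm f p μ := by
    rw [two_mul]
    calc eLpNorm (fun x => f (x + t) - f x) p μ
        ≤ eLpNorm (fun x => f (x + t)) p μ + eLpNorm f p μ := h1
      _ = eLpNorm f p μ + eLpNorm f p μ := by rw [eLpNorm_shift μ p hf.1 t]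
  have h4 : (2 : ℝ≥0∞) * eLpNorm f p μ ≠ ⊤ := ENNReal.mul_ne_top (by norm_num) hf.2.ne
  calc (eLpNorm (fun x => f (x + t) - f x) p μ).toReal
      ≤ ((2:ℝ≥0∞) * eLpNorm f p μ).toReal := ENNReal.toReal_mono h4 h3
    _ = 2 * (eLpNorm f p μ).toReal := by
        rw [ENNReal.toReal_mul]
        norm_num

lemma le_omega_of_mem (p : ℝ≥0∞) (hp1 : 1 ≤ p) {f : G m → ℂ} (hf : MemLp f p μ)
    {s : ℕ} {t : G m} (ht : t ∈ I m s) :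
    (eLpNorm (fun x => f (x + t) - f x) p μ).toReal ≤ omega m μ p f s := by
  have hbdd : BddAbove (Set.range fun t : G m =>
      ⨆ (_ : t ∈ I m s), (eLpNorm (fun x => f (x + t) - f x) p μ).toReal) := by
    refine ⟨2 * (eLpNorm f p μ).toReal, ?_⟩
    rintro r ⟨t', rfl⟩
    show (⨆ (_ : t' ∈ I m s), (eLpNorm (fun x => f (x + t') - f x) p μ).toReal)
        ≤ 2 * (eLpNorm f p μ).toReal
    rcases em (t' ∈ I m s) with h' | h'
    · rw [ciSup_pos h']
      exact omega_diff_le μ p hp1 hf t'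
    · haveI hempty : IsEmpty (t' ∈ I m s) := ⟨h'⟩
      rw [Real.iSup_of_isEmpty]
      positivity
  calc (eLpNorm (fun x => f (x + t) - f x) p μ).toReal
      = ⨆ (_ : t ∈ I m s), (eLpNorm (fun x => f (x + t) - f x) p μ).toReal :=
        (ciSup_pos (f := fun _ : t ∈ I m s =>
          (eLpNorm (fun x => f (x + t) - f x) p μ).toReal) ht).symm
    _ ≤ omega m μ p f s := le_ciSup hbdd t

end omegaBounds


set_option maxHeartbeats 2000000 in
/-- integral estimate for general Fejér kernels `K_j`, `M_k ≤ j < M_(k+1)`. -/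
theorem fejer_kernel_integral_estimate
    (m : ℕ → ℕ) (hm : ∀ k, 2 ≤ m k)
    (R : ℝ) (hR : IsLUB (Set.range fun k => (m k : ℝ)) R)
    (μ : Measure (G m)) [IsProbabilityMeasure μ] [μ.IsAddHaarMeasure]
    :
    ∃ C > (0 : ℝ), ∀ (p : ℝ≥0∞), 1 ≤ p → p ≠ ∞ → ∀ (f : G m → ℂ), MemLp f p μ →
      ∀ (k j : ℕ), M m k ≤ j → j < M m (k + 1) →
      (j : ℝ) * ∫ t, (eLpNorm (fun x => f (x + t) - f x) p μ).toReal * ‖K m j t‖ ∂μ ≤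
        C * ∑ l ∈ Finset.range (k + 1), ∑ s ∈ Finset.range (l + 1),
          (M m s : ℝ) * omega m μ p f s := by
  classical
  have hmR : ∀ i, (m i : ℝ) ≤ R := fun i => hR.1 ⟨i, rfl⟩
  have hR2 : (2:ℝ) ≤ R := le_trans (by exact_mod_cast hm 0) (hmR 0)
  have hRpos : (0:ℝ) < R := by linarith
  refine ⟨(R+1)^3, by positivity, ?_⟩
  intro p hp1 hpt f hf k j hMkj hjM
  set ω : ℕ → ℝ := omega m μ p f with hωdef
  have hω0 : ∀ s, 0 ≤ ω s := fun s => omega_nonneg μ p f s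
  have hMpos : ∀ i, (0:ℝ) < (M m i : ℝ) := fun i => by exact_mod_cast M_pos hm i
  have hM1le : ∀ i, (1:ℝ) ≤ (M m i : ℝ) := fun i => by exact_mod_cast M_pos hm i
  have hj1 : 1 ≤ j := le_trans (M_pos hm k) hMkj
  set SS : ℝ := ∑ l ∈ Finset.range (k + 1), ∑ s ∈ Finset.range (l + 1),
      (M m s : ℝ) * ω s with hSSdef
  have hSS0 : 0 ≤ SS :=
    Finset.sum_nonneg fun l _ => Finset.sum_nonneg fun s _ =>
      mul_nonneg (hMpos s).le (hω0 s)
  have hT : ∑ i ∈ Finset.range (k+1), (M m i : ℝ) * ω i ≤ SS := by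
    rw [hSSdef]
    exact Finset.single_le_sum
      (f := fun l => ∑ s ∈ Finset.range (l + 1), (M m s : ℝ) * ω s)
      (fun l _ => Finset.sum_nonneg fun s _ => mul_nonneg (hMpos s).le (hω0 s))
      (Finset.self_mem_range_succ k)
  -- indicator integrals
  have hindI_int : ∀ i, Integrable (indI m i) μ := by
    intro i
    have h : indI m i = (I m i).indicator (fun _ => (1:ℝ)) := by
      funext t
      rw [indI, Set.indicator_apply]
    rw [h]
    exact (integrable_const (1:ℝ)).indicator (measurableSet_I hm i)
  have hindI_val : ∀ i, ∫ t, indI m i t ∂μ = ((M m i : ℝ))⁻¹ := by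
    intro i
    have h : indI m i = (I m i).indicator (fun _ => (1:ℝ)) := by
      funext t
      rw [indI, Set.indicator_apply]
    rw [h, integral_indicator_const (1:ℝ) (measurableSet_I hm i),
      measureReal_def, measure_I_toReal hm μ i, smul_eq_mul, mul_one]
  have hindJ_int : ∀ s l, Integrable (indJ m s l) μ := by
    intro s l
    have h : indJ m s l = (Jset m s l).indicator (fun _ => (1:ℝ)) := by
      funext t
      rw [indJ, Set.indicator_apply]
    rw [h]
    exact (integrable_const (1:ℝ)).indicator (measurableSet_J hm s l)
  have hindJ_val : ∀ s l, s < l → ∫ t, indJ m s l t ∂μ = (m s : ℝ) * ((M m l : ℝ))⁻¹ := by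
    intro s l hsl
    have h : indJ m s l = (Jset m s l).indicator (fun _ => (1:ℝ)) := by
      funext t
      rw [indJ, Set.indicator_apply]
    rw [h, integral_indicator_const (1:ℝ) (measurableSet_J hm s l),
      measureReal_def, measure_J_toReal hm μ s l hsl, smul_eq_mul, mul_one]
  -- the majorant
  set F1 : G m → ℝ := fun t => ∑ i ∈ Finset.range (k+1),
      R * ((M m i : ℝ) * (ω i * indI m i t)) with hF1def
  set F2 : ℕ → G m → ℝ := fun l t => (M m l : ℝ) * ∑ i ∈ Finset.Ico l (k+1),
      R * ((M m i : ℝ) * (ω i * indI m i t)) with hF2def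
  set F3 : ℕ → G m → ℝ := fun l t => ∑ s ∈ Finset.range l,
      R^2 * (M m s : ℝ)^2 * ((∏ i ∈ Finset.Ico (s+1) l, m i : ℕ) : ℝ)
        * (ω s * indJ m s l t) with hF3def
  set H : G m → ℝ := fun t => F1 t + ∑ l ∈ Finset.range (k+1),
      ∑ a ∈ Finset.range (digit m j l), (F2 l t + F3 l t) with hHdef
  have hF1i : Integrable F1 μ := by
    rw [hF1def]
    exact integrable_finset_sum _ fun i _ =>
      ((((hindI_int i).const_mul (ω i)).const_mul ((M m i : ℝ))).const_mul R)
  have hF2i : ∀ l, Integrable (F2 l) μ := by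
    intro l
    rw [hF2def]
    exact (integrable_finset_sum _ fun i _ =>
      ((((hindI_int i).const_mul (ω i)).const_mul ((M m i : ℝ))).const_mul R)).const_mul _
  have hF3i : ∀ l, Integrable (F3 l) μ := by
    intro l
    rw [hF3def]
    exact integrable_finset_sum _ fun s _ =>
      (((hindJ_int s l).const_mul (ω s)).const_mul
        (R^2 * (M m s : ℝ)^2 * ((∏ i ∈ Finset.Ico (s+1) l, m i : ℕ) : ℝ)))
  have hHi : Integrable H μ := by
    rw [hHdef]
    exact hF1i.add (integrable_finset_sum _ fun l _ =>
      integrable_finset_sum _ fun a _ => (hF2i l).add (hF3i l))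
  -- integrals of the majorant
  have hF1val : ∫ t, F1 t ∂μ = ∑ i ∈ Finset.range (k+1), R * ω i := by
    rw [hF1def, integral_finset_sum _ fun i _ =>
      ((((hindI_int i).const_mul (ω i)).const_mul ((M m i : ℝ))).const_mul R)]
    refine Finset.sum_congr rfl fun i _ => ?_
    rw [integral_const_mul, integral_const_mul, integral_const_mul, hindI_val i]
    have hc : (M m i : ℝ) * (ω i * ((M m i : ℝ))⁻¹) = ω i := by
      field_simp
      rw [mul_comm, mul_div_assoc, div_self (hMpos i).ne', mul_one]
    rw [hc]
  have hF2val : ∀ l, ∫ t, F2 l t ∂μ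
      = (M m l : ℝ) * ∑ i ∈ Finset.Ico l (k+1), R * ω i := by
    intro l
    rw [hF2def]
    rw [integral_const_mul, integral_finset_sum _ fun i _ =>
      ((((hindI_int i).const_mul (ω i)).const_mul ((M m i : ℝ))).const_mul R)]
    congr 1
    refine Finset.sum_congr rfl fun i _ => ?_
    rw [integral_const_mul, integral_const_mul, integral_const_mul, hindI_val i]
    have hc : (M m i : ℝ) * (ω i * ((M m i : ℝ))⁻¹) = ω i := by
      field_simp
      rw [mul_comm, mul_div_assoc, div_self (hMpos i).ne', mul_one]
    rw [hc]
  have hF3val : ∀ l, ∫ t, F3 l t ∂μ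
      = ∑ s ∈ Finset.range l, R^2 * ((M m s : ℝ) * ω s) := by
    intro l
    rw [hF3def]
    rw [integral_finset_sum _ fun s _ =>
      (((hindJ_int s l).const_mul (ω s)).const_mul
        (R^2 * (M m s : ℝ)^2 * ((∏ i ∈ Finset.Ico (s+1) l, m i : ℕ) : ℝ)))]
    refine Finset.sum_congr rfl fun s hs => ?_
    have hsl : s < l := Finset.mem_range.mp hs
    rw [integral_const_mul, integral_const_mul, hindJ_val s l hsl]
    have hMl : (M m l : ℝ) = (M m s : ℝ) * (m s : ℝ)
        * ((∏ i ∈ Finset.Ico (s+1) l, m i : ℕ) : ℝ) := by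
      have h1 : M m l = M m (s+1) * ∏ i ∈ Finset.Ico (s+1) l, m i := M_mul_prod hm hsl
      have h2 : M m (s+1) = m s * M m s := rfl
      rw [h1, h2]
      push_cast
      ring
    have hms : (0:ℝ) < (m s : ℝ) := by
      have := hm s
      exact_mod_cast (by omega : 0 < m s)
    have hP : (0:ℝ) < ((∏ i ∈ Finset.Ico (s+1) l, m i : ℕ) : ℝ) := by
      have : 0 < ∏ i ∈ Finset.Ico (s+1) l, m i :=
        Finset.prod_pos fun i _ => by have := hm i; omega
      exact_mod_cast this
    rw [hMl]
    have hMs : (M m s : ℝ) ≠ 0 := (hMpos s).ne'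
    have hms' : (m s : ℝ) ≠ 0 := hms.ne'
    have hP' : ((∏ i ∈ Finset.Ico (s+1) l, m i : ℕ) : ℝ) ≠ 0 := hP.ne'
    generalize hPg : ((∏ i ∈ Finset.Ico (s+1) l, m i : ℕ) : ℝ) = Pv at hP' ⊢
    field_simp
  -- pointwise bound
  have hkey1 : ∀ (t : G m) (i : ℕ) (c : ℝ), 0 ≤ c → c ≤ R →
      (eLpNorm (fun x => f (x + t) - f x) p μ).toReal * (c * ((M m i : ℝ) * indI m i t))
        ≤ R * ((M m i : ℝ) * (ω i * indI m i t)) := by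
    intro t i c hc0 hcR
    rcases em (t ∈ I m i) with h' | h'
    · rw [indI, if_pos h']
      have hω' : (eLpNorm (fun x => f (x + t) - f x) p μ).toReal ≤ ω i :=
        le_omega_of_mem μ p hp1 hf h'
      have h1 : (eLpNorm (fun x => f (x + t) - f x) p μ).toReal * c ≤ ω i * R :=
        mul_le_mul hω' hcR hc0 (hω0 i)
      nlinarith [hMpos i, ENNReal.toReal_nonneg
        (a := eLpNorm (fun x => f (x + t) - f x) p μ)]
    · rw [indI, if_neg h']
      simp
  have hpoint : ∀ t, (j:ℝ) * ((eLpNorm (fun x => f (x + t) - f x) p μ).toReal * ‖K m j t‖)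
      ≤ H t := by
    intro t
    set w : ℝ := (eLpNorm (fun x => f (x + t) - f x) p μ).toReal with hwdef
    have hw0 : 0 ≤ w := ENNReal.toReal_nonneg
    have hKpt := K_pointwise hm hj1 hjM t
    have step1 : (j:ℝ) * (w * ‖K m j t‖) = w * ((j:ℝ) * ‖K m j t‖) := by ring
    rw [step1]
    have step2 : w * ((j:ℝ) * ‖K m j t‖)
        ≤ w * (‖D m j t‖ + ∑ l ∈ Finset.range (k+1), ∑ a ∈ Finset.range (digit m j l),
            ((M m l : ℝ) * ‖D m (trunc m j l + a * M m l) t‖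
              + ‖∑ b ∈ Finset.range (M m l), D m b t‖)) :=
      mul_le_mul_of_nonneg_left hKpt hw0
    refine le_trans step2 ?_
    rw [mul_add, Finset.mul_sum]
    rw [hHdef]
    have bound1 : w * ‖D m j t‖ ≤ F1 t := by
      have hD := D_norm_le hm hjM t
      calc w * ‖D m j t‖
          ≤ w * ∑ i ∈ Finset.range (k+1),
              (digit m j i : ℝ) * ((M m i : ℝ) * indI m i t) :=
            mul_le_mul_of_nonneg_left hD hw0
        _ = ∑ i ∈ Finset.range (k+1),
              w * ((digit m j i : ℝ) * ((M m i : ℝ) * indI m i t)) := Finset.mul_sum _ _ _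
        _ ≤ F1 t := by
            rw [hF1def]
            refine Finset.sum_le_sum fun i _ => ?_
            exact hkey1 t i (digit m j i : ℝ) (by positivity)
              (le_trans (by exact_mod_cast (digit_lt hm j i).le) (hmR i))
    refine add_le_add bound1 (Finset.sum_le_sum fun l hl => ?_)
    rw [Finset.mul_sum]
    refine Finset.sum_le_sum fun a ha => ?_
    rw [mul_add]
    have hlk : l < k + 1 := Finset.mem_range.mp hl
    refine add_le_add ?_ ?_
    · -- F2 bound
      set n' : ℕ := trunc m j l + a * M m l with hn'def
      have hn'j : n' ≤ j := by
        have h1 : a * M m l ≤ digit m j l * M m l :=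
          Nat.mul_le_mul_right _ (Finset.mem_range.mp ha).le
        have h2 := trunc_add_digit_mul_le hm j l
        omega
      have hn'M : n' < M m (k+1) := lt_of_le_of_lt hn'j hjM
      have hDn' := D_norm_le hm hn'M t
      have hzero : ∀ i ∈ Finset.Ico 0 l,
          (digit m n' i : ℝ) * ((M m i : ℝ) * indI m i t) = 0 := by
        intro i hi
        have hil : i < l := (Finset.mem_Ico.mp hi).2
        have hdvd : M m (i+1) ∣ n' := by
          refine dvd_add (dvd_trans (M_dvd hm hil) ?_) (dvd_trans (M_dvd hm hil) ?_)
          · exact dvd_trans (M_dvd hm (Nat.le_succ l)) (M_dvd_trunc j l)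
          · exact Dvd.intro_left a rfl
        rw [digit_eq_zero_of_dvd hm hdvd]
        simp
      have hDn'2 : ‖D m n' t‖ ≤ ∑ i ∈ Finset.Ico l (k+1),
          (digit m n' i : ℝ) * ((M m i : ℝ) * indI m i t) := by
        refine le_trans hDn' ?_
        rw [Finset.range_eq_Ico,
          ← Finset.sum_Ico_consecutive _ (Nat.zero_le l) hlk.le,
          Finset.sum_congr rfl hzero, Finset.sum_const, smul_zero, zero_add]
      calc w * ((M m l : ℝ) * ‖D m n' t‖)
          = (M m l : ℝ) * (w * ‖D m n' t‖) := by ring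
        _ ≤ (M m l : ℝ) * (w * ∑ i ∈ Finset.Ico l (k+1),
              (digit m n' i : ℝ) * ((M m i : ℝ) * indI m i t)) := by
            refine mul_le_mul_of_nonneg_left ?_ (hMpos l).le
            exact mul_le_mul_of_nonneg_left hDn'2 hw0
        _ = (M m l : ℝ) * ∑ i ∈ Finset.Ico l (k+1),
              w * ((digit m n' i : ℝ) * ((M m i : ℝ) * indI m i t)) := by
            rw [Finset.mul_sum]
        _ ≤ F2 l t := by
            rw [hF2def]
            refine mul_le_mul_of_nonneg_left (Finset.sum_le_sum fun i _ => ?_) (hMpos l).le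
            exact hkey1 t i (digit m n' i : ℝ) (by positivity)
              (le_trans (by exact_mod_cast (digit_lt hm n' i).le) (hmR i))
    · -- F3 bound
      have hsumD := sumD_norm_le hm l t
      calc w * ‖∑ b ∈ Finset.range (M m l), D m b t‖
          ≤ w * ∑ s ∈ Finset.range l,
              (m s : ℝ)^2 * (M m s : ℝ)^2
                * ((∏ i ∈ Finset.Ico (s+1) l, m i : ℕ) : ℝ) * indJ m s l t :=
            mul_le_mul_of_nonneg_left hsumD hw0
        _ = ∑ s ∈ Finset.range l,
              w * ((m s : ℝ)^2 * (M m s : ℝ)^2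
                * ((∏ i ∈ Finset.Ico (s+1) l, m i : ℕ) : ℝ) * indJ m s l t) :=
            Finset.mul_sum _ _ _
        _ ≤ F3 l t := by
            rw [hF3def]
            refine Finset.sum_le_sum fun s hs => ?_
            have hsl : s < l := Finset.mem_range.mp hs
            rcases em (t ∈ Jset m s l) with h' | h'
            · rw [indJ, if_pos h']
              have hω' : w ≤ ω s := by
                rw [hwdef]
                exact le_omega_of_mem μ p hp1 hf (Jset_subset_I hsl.le h')
              have hms : (m s : ℝ) ≤ R := hmR s
              have hms0 : (0:ℝ) ≤ (m s : ℝ) := by positivity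
              have hP : (0:ℝ) ≤ ((∏ i ∈ Finset.Ico (s+1) l, m i : ℕ) : ℝ) := by positivity
              have h1 : (m s : ℝ)^2 ≤ R^2 := by nlinarith
              have h2 : w * (m s : ℝ)^2 ≤ ω s * R^2 :=
                mul_le_mul hω' h1 (by positivity) (hω0 s)
              nlinarith [hMpos s, sq_nonneg (M m s : ℝ), hP, hw0,
                mul_nonneg (mul_nonneg (sq_nonneg (M m s : ℝ)) hP)
                  (sub_nonneg.mpr h2)]
            · rw [indJ, if_neg h']
              simp
  -- putting everything together
  have hHval : ∫ t, H t ∂μ ≤ (R+1)^3 * SS := by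
    have hint : ∫ t, H t ∂μ = (∑ i ∈ Finset.range (k+1), R * ω i)
        + ∑ l ∈ Finset.range (k+1), ∑ a ∈ Finset.range (digit m j l),
            ((M m l : ℝ) * ∑ i ∈ Finset.Ico l (k+1), R * ω i
              + ∑ s ∈ Finset.range l, R^2 * ((M m s : ℝ) * ω s)) := by
      have hF23each : ∀ l, Integrable (fun t => F2 l t + F3 l t) μ :=
        fun l => (hF2i l).add (hF3i l)
      have hF23i : Integrable (fun t => ∑ l ∈ Finset.range (k+1),
          ∑ a ∈ Finset.range (digit m j l), (F2 l t + F3 l t)) μ :=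
        integrable_finset_sum _ fun l _ => integrable_finset_sum _ fun a _ => hF23each l
      rw [hHdef]
      rw [integral_add hF1i hF23i]
      rw [hF1val]
      congr 1
      rw [integral_finset_sum _ fun l _ =>
        integrable_finset_sum _ fun a _ => hF23each l]
      refine Finset.sum_congr rfl fun l _ => ?_
      rw [integral_finset_sum _ fun a _ => hF23each l]
      refine Finset.sum_congr rfl fun a _ => ?_
      rw [integral_add (hF2i l) (hF3i l), hF2val l, hF3val l]
    rw [hint]
    have hA : ∑ i ∈ Finset.range (k+1), R * ω i ≤ R * SS := by
      rw [← Finset.mul_sum]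
      refine mul_le_mul_of_nonneg_left (le_trans ?_ hT) hRpos.le
      exact Finset.sum_le_sum fun i _ => by nlinarith [hM1le i, hω0 i]
    have hdig_le : ∀ l, (digit m j l : ℝ) ≤ R :=
      fun l => le_trans (by exact_mod_cast (digit_lt hm j l).le) (hmR l)
    have hB : ∑ l ∈ Finset.range (k+1), ∑ a ∈ Finset.range (digit m j l),
        ((M m l : ℝ) * ∑ i ∈ Finset.Ico l (k+1), R * ω i)
          ≤ 2 * R^2 * SS := by
      have h1 : ∀ l ∈ Finset.range (k+1),
          ∑ a ∈ Finset.range (digit m j l),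
            ((M m l : ℝ) * ∑ i ∈ Finset.Ico l (k+1), R * ω i)
          ≤ R * ((M m l : ℝ) * ∑ i ∈ Finset.Ico l (k+1), R * ω i) := by
        intro l _
        rw [Finset.sum_const, Finset.card_range, nsmul_eq_mul]
        refine mul_le_mul_of_nonneg_right (hdig_le l) ?_
        refine mul_nonneg (hMpos l).le (Finset.sum_nonneg fun i _ => ?_)
        exact mul_nonneg hRpos.le (hω0 i)
      refine le_trans (Finset.sum_le_sum h1) ?_
      have h2 : ∑ l ∈ Finset.range (k+1),
          R * ((M m l : ℝ) * ∑ i ∈ Finset.Ico l (k+1), R * ω i)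
          = R^2 * ∑ l ∈ Finset.range (k+1),
              ∑ i ∈ Finset.Ico l (k+1), (M m l : ℝ) * ω i := by
        rw [Finset.mul_sum]
        refine Finset.sum_congr rfl fun l _ => ?_
        rw [Finset.mul_sum, Finset.mul_sum, Finset.mul_sum]
        refine Finset.sum_congr rfl fun i _ => ?_
        ring
      rw [h2, sum_triangle_swap (fun l i => (M m l : ℝ) * ω i)]
      have h3 : ∑ i ∈ Finset.range (k+1), ∑ l ∈ Finset.range (i+1), (M m l : ℝ) * ω i
          ≤ ∑ i ∈ Finset.range (k+1), 2 * ((M m i : ℝ) * ω i) := by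
        refine Finset.sum_le_sum fun i _ => ?_
        have h4 : ∑ l ∈ Finset.range (i+1), (M m l : ℝ) = ((∑ l ∈ Finset.range (i+1), M m l : ℕ) : ℝ) := by
          push_cast
          rfl
        have h5 : ((∑ l ∈ Finset.range (i+1), M m l : ℕ) : ℝ) ≤ 2 * (M m i : ℝ) := by
          exact_mod_cast sum_M_le hm i
        calc ∑ l ∈ Finset.range (i+1), (M m l : ℝ) * ω i
            = (∑ l ∈ Finset.range (i+1), (M m l : ℝ)) * ω i := (Finset.sum_mul _ _ _).symm
          _ ≤ (2 * (M m i : ℝ)) * ω i := by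
              refine mul_le_mul_of_nonneg_right ?_ (hω0 i)
              rw [h4]; exact h5
          _ = 2 * ((M m i : ℝ) * ω i) := by ring
      calc R^2 * ∑ i ∈ Finset.range (k+1), ∑ l ∈ Finset.range (i+1), (M m l : ℝ) * ω i
          ≤ R^2 * ∑ i ∈ Finset.range (k+1), 2 * ((M m i : ℝ) * ω i) := by
            refine mul_le_mul_of_nonneg_left h3 (by positivity)
        _ = 2 * R^2 * ∑ i ∈ Finset.range (k+1), (M m i : ℝ) * ω i := by
            rw [← Finset.mul_sum]; ring
        _ ≤ 2 * R^2 * SS := by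
            refine mul_le_mul_of_nonneg_left hT (by positivity)
    have hC : ∑ l ∈ Finset.range (k+1), ∑ a ∈ Finset.range (digit m j l),
        (∑ s ∈ Finset.range l, R^2 * ((M m s : ℝ) * ω s))
          ≤ R^3 * SS := by
      have h1 : ∀ l ∈ Finset.range (k+1),
          ∑ a ∈ Finset.range (digit m j l),
            (∑ s ∈ Finset.range l, R^2 * ((M m s : ℝ) * ω s))
          ≤ R * ∑ s ∈ Finset.range l, R^2 * ((M m s : ℝ) * ω s) := by
        intro l _
        rw [Finset.sum_const, Finset.card_range, nsmul_eq_mul]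
        refine mul_le_mul_of_nonneg_right (hdig_le l) ?_
        exact Finset.sum_nonneg fun s _ => mul_nonneg (by positivity) (mul_nonneg (hMpos s).le (hω0 s))
      refine le_trans (Finset.sum_le_sum h1) ?_
      have h2 : ∀ l ∈ Finset.range (k+1),
          R * ∑ s ∈ Finset.range l, R^2 * ((M m s : ℝ) * ω s)
          ≤ R^3 * ∑ s ∈ Finset.range (l+1), (M m s : ℝ) * ω s := by
        intro l _
        have h3 : ∑ s ∈ Finset.range l, R^2 * ((M m s : ℝ) * ω s)
            ≤ R^2 * ∑ s ∈ Finset.range (l+1), (M m s : ℝ) * ω s := by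
          rw [Finset.mul_sum]
          refine Finset.sum_le_sum_of_subset_of_nonneg
            (Finset.range_subset_range.mpr (Nat.le_succ l))
            fun s _ _ => mul_nonneg (by positivity) (mul_nonneg (hMpos s).le (hω0 s))
        calc R * ∑ s ∈ Finset.range l, R^2 * ((M m s : ℝ) * ω s)
            ≤ R * (R^2 * ∑ s ∈ Finset.range (l+1), (M m s : ℝ) * ω s) :=
              mul_le_mul_of_nonneg_left h3 hRpos.le
          _ = R^3 * ∑ s ∈ Finset.range (l+1), (M m s : ℝ) * ω s := by ring
      refine le_trans (Finset.sum_le_sum h2) ?_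
      rw [← Finset.mul_sum, hSSdef]
    have hsplit : ∑ l ∈ Finset.range (k+1), ∑ a ∈ Finset.range (digit m j l),
        ((M m l : ℝ) * ∑ i ∈ Finset.Ico l (k+1), R * ω i
          + ∑ s ∈ Finset.range l, R^2 * ((M m s : ℝ) * ω s))
        = (∑ l ∈ Finset.range (k+1), ∑ a ∈ Finset.range (digit m j l),
            ((M m l : ℝ) * ∑ i ∈ Finset.Ico l (k+1), R * ω i))
          + ∑ l ∈ Finset.range (k+1), ∑ a ∈ Finset.range (digit m j l),
              (∑ s ∈ Finset.range l, R^2 * ((M m s : ℝ) * ω s)) := by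
      rw [← Finset.sum_add_distrib]
      refine Finset.sum_congr rfl fun l _ => ?_
      rw [← Finset.sum_add_distrib]
    rw [hsplit]
    have hfinal : R * SS + (2 * R^2 * SS + R^3 * SS) ≤ (R+1)^3 * SS := by
      nlinarith [hSS0, hRpos, hR2]
    calc (∑ i ∈ Finset.range (k+1), R * ω i)
          + ((∑ l ∈ Finset.range (k+1), ∑ a ∈ Finset.range (digit m j l),
              ((M m l : ℝ) * ∑ i ∈ Finset.Ico l (k+1), R * ω i))
            + ∑ l ∈ Finset.range (k+1), ∑ a ∈ Finset.range (digit m j l),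
                (∑ s ∈ Finset.range l, R^2 * ((M m s : ℝ) * ω s)))
        ≤ R * SS + (2 * R^2 * SS + R^3 * SS) := by
          refine add_le_add hA (add_le_add hB hC)
      _ ≤ (R+1)^3 * SS := hfinal
  -- conclusion
  by_cases hgint : Integrable
      (fun t => (eLpNorm (fun x => f (x + t) - f x) p μ).toReal * ‖K m j t‖) μ
  · calc (j:ℝ) * ∫ t, (eLpNorm (fun x => f (x + t) - f x) p μ).toReal * ‖K m j t‖ ∂μ
        = ∫ t, (j:ℝ) * ((eLpNorm (fun x => f (x + t) - f x) p μ).toReal * ‖K m j t‖) ∂μ :=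
          (integral_const_mul _ _).symm
      _ ≤ ∫ t, H t ∂μ := integral_mono (hgint.const_mul _) hHi hpoint
      _ ≤ (R+1)^3 * SS := hHval
  · rw [integral_undef hgint, mul_zero]
    exact mul_nonneg (by positivity) hSS0


end VilenkinPaper
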